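/- Let G be a group that is nilpotent of class at most 3 (i.e. every triple commutator ⁅⁅x,y⁆,z⁆ lies in the center Z(G)). Then every loop commutator °⁅x,y⁆ = (y∘x)·(x∘y)·(y∘x)⁻² lies in the center Z(°G) of the associated gyrogroup (i.e. satisfies both the commutant condition (°⁅x,y⁆·z)³ = °⁅x,y⁆³·z³ for all z ∈ G and the nucleus condition ⁅u,⁅°⁅x,y⁆, v⁻¹⁆⁆ = 1 for all u,v ∈ G) for all x,y ∈ G if and only if ⁅x,y⁆³ satisfies the commutant condition (⁅x,y⁆³·z)³ = ⁅x,y⁆⁹·z³ for all z ∈ G, for all x,y ∈ G. (Equivalently: °G is a nilpotent loop of class 2 if and only if ⁅x,y⁆³ ∈ C(°G) for all x,y ∈ G.) -/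

import Mathlib

/-- The gyrogroup operation associated with a group: `x ∘ y = y⁻¹ * x * y²`. -/
def gyrOp {G : Type*} [Group G] (x y : G) : G := y⁻¹ * x * y ^ 2

/-- The loop commutator of the associated gyrogroup:
`°⁅x,y⁆ = (y∘x)·(x∘y)·(y∘x)⁻²`. -/
def loopComm {G : Type*} [Group G] (x y : G) : G :=
  gyrOp y x * gyrOp x y * (gyrOp y x ^ 2)⁻¹

open scoped commutatorElement

lemma key {H : Type*} [Group H] (hcomm : ∀ a b z : H, ⁅⁅a, b⁆, z⁆ = 1) (x y : H) :
    loopComm x y = ⁅x, y⁆ ^ 3 := by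
  have hC : ∀ z : H, Commute ⁅x, y⁆ z :=
    fun z => commutatorElement_eq_one_iff_commute.mp (hcomm x y z)
  set k := ⁅x, y⁆ with hk
  -- moving k
  have mvt : ∀ g : H, g * k = k * g := fun g => ((hC g).symm).eq
  have mvt' : ∀ g : H, g * k⁻¹ = k⁻¹ * g := fun g => (((hC g).inv_left).symm).eq
  have mv : ∀ g t : H, g * (k * t) = k * (g * t) := fun g t => by
    rw [← mul_assoc, mvt g, mul_assoc]
  have mv' : ∀ g t : H, g * (k⁻¹ * t) = k⁻¹ * (g * t) := fun g t => by
    rw [← mul_assoc, mvt' g, mul_assoc]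
  -- free-group facts
  have A1 : ∀ t : H, y * (x * t) = k⁻¹ * (x * (y * t)) := by
    intro t; rw [hk, commutatorElement_def]; group
  have A1t : y * x = k⁻¹ * (x * y) := by
    rw [hk, commutatorElement_def]; group
  have B1 : ∀ t : H, x * (y * t) = k * (y * (x * t)) := by
    intro t; rw [hk, commutatorElement_def]; group
  -- derived swap rules
  have A2 : ∀ t : H, y * (x⁻¹ * t) = k * (x⁻¹ * (y * t)) := by
    intro t
    apply mul_left_cancel (a := x)
    simp only [B1, mv, mul_inv_cancel_left]
  have A2t : y * x⁻¹ = k * (x⁻¹ * y) := by simpa using A2 1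
  have A3 : ∀ t : H, y⁻¹ * (x * t) = k * (x * (y⁻¹ * t)) := by
    intro t
    apply mul_left_cancel (a := y)
    simp only [mv, A1, mul_inv_cancel_left, inv_mul_cancel_left]
  have A3t : y⁻¹ * x = k * (x * y⁻¹) := by simpa using A3 1
  have A4 : ∀ t : H, y⁻¹ * (x⁻¹ * t) = k⁻¹ * (x⁻¹ * (y⁻¹ * t)) := by
    intro t
    apply mul_left_cancel (a := y)
    simp only [mv', A2, mul_inv_cancel_left, inv_mul_cancel_left]
  have A4t : y⁻¹ * x⁻¹ = k⁻¹ * (x⁻¹ * y⁻¹) := by simpa using A4 1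
  show loopComm x y = k ^ 3
  simp only [loopComm, gyrOp, pow_succ, pow_zero, one_mul, mul_inv_rev, inv_inv, mul_assoc]
  simp only [A1, A1t, A2, A2t, A3, A3t, A4, A4t,
    mv x, mv y, mv x⁻¹, mv y⁻¹, mv' x, mv' y, mv' x⁻¹, mv' y⁻¹,
    mvt x, mvt y, mvt x⁻¹, mvt y⁻¹, mvt' x, mvt' y, mvt' x⁻¹, mvt' y⁻¹,
    inv_mul_cancel_left, mul_inv_cancel_left, mul_one, one_mul,
    inv_mul_cancel, mul_inv_cancel]

lemma cond_mul_central {G : Type*} [Group G] {w : G} (hw : w ∈ Subgroup.center G) (a : G) :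
    (∀ z : G, (a * w * z) ^ 3 = (a * w) ^ 3 * z ^ 3) ↔
    (∀ z : G, (a * z) ^ 3 = a ^ 3 * z ^ 3) := by
  have hC : ∀ g : G, Commute w g := fun g => (Subgroup.mem_center_iff.mp hw g).symm
  have e1 : ∀ z : G, (a * w * z) ^ 3 = (a * z) ^ 3 * w ^ 3 := fun z => by
    rw [mul_assoc, (hC z).eq, ← mul_assoc, ((hC (a * z)).symm).mul_pow]
  have e2 : ∀ z : G, (a * w) ^ 3 * z ^ 3 = a ^ 3 * z ^ 3 * w ^ 3 := fun z => by
    rw [((hC a).symm).mul_pow, mul_assoc, ((hC (z ^ 3)).pow_left 3).eq, ← mul_assoc]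
  constructor
  · intro h z
    have := h z
    rw [e1, e2] at this
    exact mul_right_cancel this
  · intro h z
    rw [e1, e2, h z]

theorem loopComm_central_iff_cube_commutator_in_commutant {G : Type*} [Group G]
    (h3 : ∀ x y z : G, ⁅⁅x, y⁆, z⁆ ∈ Subgroup.center G) :
    (∀ x y : G,
      (∀ z : G, (loopComm x y * z) ^ 3 = (loopComm x y) ^ 3 * z ^ 3) ∧
      (∀ u v : G, ⁅u, ⁅loopComm x y, v⁻¹⁆⁆ = 1)) ↔
    (∀ x y : G, ∀ z : G, (⁅x, y⁆ ^ 3 * z) ^ 3 = ⁅x, y⁆ ^ 9 * z ^ 3) := by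
  set Z := Subgroup.center G with hZ
  -- the quotient G/Z satisfies: all commutators are central (triple commutators vanish)
  have hq : ∀ a b z : G ⧸ Z, ⁅⁅a, b⁆, z⁆ = 1 := by
    intro a b z
    induction a using QuotientGroup.induction_on with | H g1 => ?_
    induction b using QuotientGroup.induction_on with | H g2 => ?_
    induction z using QuotientGroup.induction_on with | H g3 => ?_
    have : ((⁅⁅g1, g2⁆, g3⁆ : G) : G ⧸ Z) = 1 :=
      (QuotientGroup.eq_one_iff _).mpr (h3 g1 g2 g3)
    simpa only [commutatorElement_def, QuotientGroup.mk_mul, QuotientGroup.mk_inv] using this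
  -- image of loopComm in the quotient
  have hmapL : ∀ x y : G, ((loopComm x y : G) : G ⧸ Z) = ⁅(x : G ⧸ Z), (y : G ⧸ Z)⁆ ^ 3 := by
    intro x y
    have : ((loopComm x y : G) : G ⧸ Z) = loopComm (x : G ⧸ Z) (y : G ⧸ Z) := by
      simp [loopComm, gyrOp]
    rw [this, key hq]
  -- loopComm x y = ⁅x,y⁆^3 * (central element)
  have hwmem : ∀ x y : G, (⁅x, y⁆ ^ 3)⁻¹ * loopComm x y ∈ Z := by
    intro x y
    rw [hZ, ← QuotientGroup.eq_one_iff]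
    have : (((⁅x, y⁆ ^ 3)⁻¹ * loopComm x y : G) : G ⧸ Z)
        = (⁅(x : G ⧸ Z), (y : G ⧸ Z)⁆ ^ 3)⁻¹ * (((loopComm x y : G)) : G ⧸ Z) := by
      simp [commutatorElement_def]
    rw [this, hmapL, inv_mul_cancel]
  have hLw : ∀ x y : G, loopComm x y = ⁅x, y⁆ ^ 3 * ((⁅x, y⁆ ^ 3)⁻¹ * loopComm x y) := by
    intro x y; rw [mul_inv_cancel_left]
  have h9 : ∀ x y : G, (⁅x, y⁆ ^ 3) ^ 3 = ⁅x, y⁆ ^ 9 := by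
    intro x y; rw [← pow_mul]
  constructor
  · intro hL x y z
    have h1 : ∀ z : G, (⁅x, y⁆ ^ 3 * ((⁅x, y⁆ ^ 3)⁻¹ * loopComm x y) * z) ^ 3
        = (⁅x, y⁆ ^ 3 * ((⁅x, y⁆ ^ 3)⁻¹ * loopComm x y)) ^ 3 * z ^ 3 := by
      intro z; rw [← hLw]; exact (hL x y).1 z
    have := (cond_mul_central (hwmem x y) (⁅x, y⁆ ^ 3)).mp h1 z
    rwa [h9] at this
  · intro hR x y
    have h1 : ∀ z : G, (⁅x, y⁆ ^ 3 * z) ^ 3 = (⁅x, y⁆ ^ 3) ^ 3 * z ^ 3 := by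
      intro z; rw [h9]; exact hR x y z
    constructor
    · intro z
      have := (cond_mul_central (hwmem x y) (⁅x, y⁆ ^ 3)).mpr h1 z
      rwa [← hLw] at this
    · intro u v
      have hm : ⁅loopComm x y, v⁻¹⁆ ∈ Z := by
        rw [hZ, ← QuotientGroup.eq_one_iff]
        have hcast : ((⁅loopComm x y, v⁻¹⁆ : G) : G ⧸ Z)
            = ⁅((loopComm x y : G) : G ⧸ Z), ((v : G ⧸ Z))⁻¹⁆ := by
          simp only [commutatorElement_def, QuotientGroup.mk_mul, QuotientGroup.mk_inv]
        rw [hcast, hmapL]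
        exact commutatorElement_eq_one_iff_commute.mpr
          (((commutatorElement_eq_one_iff_commute.mp (hq x y ((v : G ⧸ Z))⁻¹)).pow_left 3))
      exact commutatorElement_eq_one_iff_commute.mpr (Subgroup.mem_center_iff.mp hm u)
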